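/- A relational monoid (X,R) is coherent if and only if for all x, y, r x = ℓ y implies D(x,y). -/
import Mathlib


/-- Relational associativity. -/
def RelAssoc {X : Type*} (R : X → X → X → Prop) : Prop :=
  ∀ u x y z : X, (∃ v, R u x v ∧ R v y z) ↔ (∃ v, R u v z ∧ R v x y)

/-- Definedness: `D R x y` iff the composite of `x` and `y` exists. -/
def D {X : Type*} (R : X → X → X → Prop) (x y : X) : Prop := ∃ z, R z x y

/-- Relational left unit. -/
def IsLUnit {X : Type*} (R : X → X → X → Prop) (e : X) : Prop :=
  (∃ x, R x e x) ∧ ∀ x y, R y e x → y = x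

/-- Relational right unit. -/
def IsRUnit {X : Type*} (R : X → X → X → Prop) (e : X) : Prop :=
  (∃ x, R x x e) ∧ ∀ x y, R y x e → y = x

/-- Relational unit: a left or a right unit. -/
def IsUnit' {X : Type*} (R : X → X → X → Prop) (e : X) : Prop :=
  IsLUnit R e ∨ IsRUnit R e

/-- Relational monoid: relationally associative, and every element has a left
unit composable on the left and a right unit composable on the right. -/
def RelMonoid {X : Type*} (R : X → X → X → Prop) : Prop :=
  RelAssoc R ∧ ∀ x, (∃ e, IsLUnit R e ∧ D R e x) ∧ (∃ e, IsRUnit R e ∧ D R x e)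

/-- Coherence. -/
def Coherent {X : Type*} (R : X → X → X → Prop) : Prop :=
  ∀ v x y z, R v x y → D R y z → D R v z

/-- Weak functionality: `R` is a partial operation. -/
def WFun {X : Type*} (R : X → X → X → Prop) : Prop :=
  ∀ x x' y z, R x y z → R x' y z → x = x'

/-- Every unit in a relational monoid is both a left and a right unit. -/
lemma unit_both {X : Type*} {R : X → X → X → Prop} (hM : RelMonoid R)
    {e : X} (h : IsUnit' R e) : IsLUnit R e ∧ IsRUnit R e := by
  obtain ⟨_, hu⟩ := hM
  rcases h with hL | hR
  · refine ⟨hL, ?_⟩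
    obtain ⟨e₀, hR₀, w, hw⟩ := (hu e).2
    -- hw : R w e e₀
    have hwe : w = e₀ := hL.2 e₀ w hw
    rw [hwe] at hw
    have he : e₀ = e := hR₀.2 e e₀ hw
    exact he ▸ hR₀
  · refine ⟨?_, hR⟩
    obtain ⟨e₀, hL₀, w, hw⟩ := (hu e).1
    -- hw : R w e₀ e
    have hwe : w = e₀ := hR.2 e₀ w hw
    rw [hwe] at hw
    have he : e₀ = e := hL₀.2 e e₀ hw
    exact he ▸ hL₀

/-- Uniqueness of right units of an element. -/
lemma runit_unique {X : Type*} {R : X → X → X → Prop} (hM : RelMonoid R)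
    {e e' x : X} (he : IsUnit' R e) (he' : IsUnit' R e')
    (h1 : R x x e) (h2 : R x x e') : e' = e := by
  have heR : IsRUnit R e := (unit_both hM he).2
  have he'L : IsLUnit R e' := (unit_both hM he').1
  obtain ⟨v, hv1, hv2⟩ := (hM.1 x x e' e).mpr ⟨x, h1, h2⟩
  -- hv1 : R x x v, hv2 : R v e' e
  have hve : v = e' := heR.2 e' v hv2
  rw [hve] at hv2
  exact he'L.2 e e' hv2

theorem stmt11 {X : Type*} (R : X → X → X → Prop) (hM : RelMonoid R)
    (l r : X → X)
    (hl : ∀ x, IsUnit' R (l x) ∧ R x (l x) x)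
    (hr : ∀ x, IsUnit' R (r x) ∧ R x x (r x)) :
    Coherent R ↔ ∀ x y : X, r x = l y → D R x y := by
  constructor
  · intro hC x y hxy
    exact hC x x (r x) y (hr x).2 ⟨y, hxy ▸ (hl y).2⟩
  · intro H v x y z hvxy ⟨w, hw⟩
    -- Fact C : r v = r y
    have hC : r v = r y := by
      obtain ⟨s, hs1, hs2⟩ := (hM.1 v x y (r y)).mp ⟨y, hvxy, (hr y).2⟩
      -- hs1 : R v s (r y), hs2 : R s x y
      have hryR : IsRUnit R (r y) := (unit_both hM (hr y).1).2
      have hvs : v = s := hryR.2 s v hs1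
      rw [← hvs] at hs1
      exact runit_unique hM (hr y).1 (hr v).1 hs1 (hr v).2
    -- Fact D : r y = l z
    have hD : r y = l z := by
      obtain ⟨s, hs1, hs2⟩ := (hM.1 w y (l z) z).mp ⟨z, hw, (hl z).2⟩
      -- hs1 : R w s z, hs2 : R s y (l z)
      have hlzR : IsRUnit R (l z) := (unit_both hM (hl z).1).2
      have hsy : s = y := hlzR.2 y s hs2
      rw [hsy] at hs2
      exact runit_unique hM (hl z).1 (hr y).1 hs2 (hr y).2
    exact H v z (hC.trans hD)
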